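/- Let K be a finite simplicial complex with a filtration, let X be a set of simplices occupying contiguous positions in the filtration order, and let a second filtration be obtained from the first by reordering only the simplices within X (keeping all other simplices fixed, and the set of positions of X fixed). Then every persistence pair with both endpoints outside X is the same in both filtrations. -/

import Mathlib

open Matrix

/-- A finite abstract simplicial complex: a finite family of nonempty finite
sets closed under taking nonempty subsets. -/
def IsComplex (K : Finset (Finset ℕ)) : Prop :=
  (∀ τ ∈ K, τ.Nonempty) ∧ ∀ τ ∈ K, ∀ σ : Finset ℕ, σ ⊆ τ → σ.Nonempty → σ ∈ K

/-- The simplices of the complex `K`. -/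
abbrev Simp (K : Finset (Finset ℕ)) := {σ : Finset ℕ // σ ∈ K}

/-- A filtration order on the simplices, given by an injective position
function compatible with the face relation. -/
def IsSimpFiltration (K : Finset (Finset ℕ)) (pos : Simp K → ℕ) : Prop :=
  Function.Injective pos ∧ ∀ σ τ : Simp K, σ.1 ⊆ τ.1 → σ ≠ τ → pos σ < pos τ

/-- The (full) boundary matrix of `K` over `ℤ/2`. -/
def bdry (K : Finset (Finset ℕ)) : Matrix (Simp K) (Simp K) (ZMod 2) :=
  fun σ τ => if σ.1 ⊆ τ.1 ∧ σ.1.card + 1 = τ.1.card then 1 else 0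

/-- `σ` is the low of column `τ` of `R` with respect to the order `pos`:
the entry `R σ τ` is nonzero and `σ` is the last such row. -/
def IsLow (K : Finset (Finset ℕ)) (pos : Simp K → ℕ)
    (R : Matrix (Simp K) (Simp K) (ZMod 2)) (τ σ : Simp K) : Prop :=
  R σ τ ≠ 0 ∧ ∀ σ' : Simp K, R σ' τ ≠ 0 → pos σ' ≤ pos σ

/-- `(σ, τ)` is a persistence pair of the filtration `pos`: in some (hence, by
pairing uniqueness, any) reduced decomposition `R = D V` of the boundary matrix,
with `V` invertible and upper-triangular with respect to `pos`, the low of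
column `τ` is `σ`. -/
def PersPair (K : Finset (Finset ℕ)) (pos : Simp K → ℕ) (σ τ : Simp K) : Prop :=
  ∃ R Vm : Matrix (Simp K) (Simp K) (ZMod 2),
    (∀ a b : Simp K, pos b < pos a → Vm a b = 0) ∧ IsUnit Vm ∧
    R = bdry K * Vm ∧
    (∀ τ₁ τ₂ s : Simp K, IsLow K pos R τ₁ s → IsLow K pos R τ₂ s → τ₁ = τ₂) ∧
    IsLow K pos R τ σ

namespace ReorderAux

variable {K : Finset (Finset ℕ)}

/-- Column of a matrix as a vector. -/
def col (M : Matrix (Simp K) (Simp K) (ZMod 2)) (c : Simp K) : Simp K → ZMod 2 :=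
  fun r => M r c

/-- Vectors supported on rows satisfying `P`. -/
def suppOn (P : Simp K → Prop) : Submodule (ZMod 2) (Simp K → ZMod 2) where
  carrier := {v | ∀ ρ, ¬ P ρ → v ρ = 0}
  add_mem' := by intro v w hv hw ρ h; simp [Pi.add_apply, hv ρ h, hw ρ h]
  zero_mem' := by intro ρ _; rfl
  smul_mem' := by intro c v hv ρ h; simp [Pi.smul_apply, hv ρ h]

lemma mem_suppOn {P : Simp K → Prop} {v : Simp K → ZMod 2} :
    v ∈ suppOn P ↔ ∀ ρ, ¬ P ρ → v ρ = 0 := Iff.rfl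

/-- Span of the columns indexed by `P`. -/
def colSpan (M : Matrix (Simp K) (Simp K) (ZMod 2)) (P : Simp K → Prop) :
    Submodule (ZMod 2) (Simp K → ZMod 2) :=
  Submodule.span (ZMod 2) (col M '' {c | P c})

lemma col_mul (A B : Matrix (Simp K) (Simp K) (ZMod 2)) (c : Simp K) :
    col (A * B) c = ∑ c', B c' c • col A c' := by
  funext r
  simp only [col, Matrix.mul_apply, Finset.sum_apply, Pi.smul_apply, smul_eq_mul]
  exact Finset.sum_congr rfl fun c' _ => mul_comm _ _

lemma colSpan_mul_le (pos : Simp K → ℕ) (A B : Matrix (Simp K) (Simp K) (ZMod 2))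
    (hB : ∀ a b, pos b < pos a → B a b = 0) (j : ℕ) :
    colSpan (A * B) (fun c => pos c < j) ≤ colSpan A (fun c => pos c < j) := by
  rw [colSpan, Submodule.span_le]
  rintro _ ⟨c, hc, rfl⟩
  simp only [Set.mem_setOf_eq] at hc
  rw [col_mul]
  refine Submodule.sum_mem _ fun c' _ => ?_
  by_cases h : B c' c = 0
  · rw [h, zero_smul]; exact Submodule.zero_mem _
  · refine Submodule.smul_mem _ _ (Submodule.subset_span ⟨c', ?_, rfl⟩)
    have h2 : ¬ pos c < pos c' := fun hlt => h (hB c' c hlt)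
    simp only [Set.mem_setOf_eq]
    omega

lemma sub_diag_smul_mem (pos : Simp K → ℕ) (hinj : Function.Injective pos)
    (A B : Matrix (Simp K) (Simp K) (ZMod 2))
    (hB : ∀ a b, pos b < pos a → B a b = 0) (τ : Simp K) :
    col (A * B) τ - B τ τ • col A τ ∈ colSpan A (fun c => pos c < pos τ) := by
  rw [col_mul, ← Finset.add_sum_erase _ _ (Finset.mem_univ τ), add_sub_cancel_left]
  refine Submodule.sum_mem _ fun c hc => ?_
  by_cases h : B c τ = 0
  · rw [h, zero_smul]; exact Submodule.zero_mem _
  · refine Submodule.smul_mem _ _ (Submodule.subset_span ⟨c, ?_, rfl⟩)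
    have hne : c ≠ τ := Finset.ne_of_mem_erase hc
    have h2 : ¬ pos τ < pos c := fun hlt => h (hB c τ hlt)
    have h3 : pos c ≠ pos τ := fun he => hne (hinj he)
    simp only [Set.mem_setOf_eq]
    omega

lemma exists_low_of_mem_span (pos : Simp K → ℕ) (hinj : Function.Injective pos)
    (R : Matrix (Simp K) (Simp K) (ZMod 2))
    (hred : ∀ τ₁ τ₂ s : Simp K, IsLow K pos R τ₁ s → IsLow K pos R τ₂ s → τ₁ = τ₂)
    (P : Simp K → Prop) (z : Simp K → ZMod 2) (hz : z ∈ colSpan R P)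
    (σ : Simp K) (hσ : z σ ≠ 0) (htop : ∀ ρ, z ρ ≠ 0 → pos ρ ≤ pos σ) :
    ∃ c, P c ∧ IsLow K pos R c σ := by
  rw [colSpan, Finsupp.mem_span_image_iff_linearCombination] at hz
  obtain ⟨l, hl, rfl⟩ := hz
  rw [Finsupp.mem_supported] at hl
  have hz_eval : ∀ ρ, (Finsupp.linearCombination (ZMod 2) (col R) l) ρ
      = ∑ c ∈ l.support, l c * R ρ c := by
    intro ρ
    rw [Finsupp.linearCombination_apply]
    simp only [Finsupp.sum, Finset.sum_apply, Pi.smul_apply, smul_eq_mul]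
    rfl
  classical
  set S : Finset (Simp K) := Finset.univ.filter (fun ρ => ∃ c ∈ l.support, R ρ c ≠ 0) with hS
  have hσS : σ ∈ S := by
    rw [hz_eval] at hσ
    obtain ⟨c, hc, hne⟩ := Finset.exists_ne_zero_of_sum_ne_zero hσ
    exact Finset.mem_filter.2 ⟨Finset.mem_univ _, c, hc, fun h0 => hne (by rw [h0, mul_zero])⟩
  obtain ⟨ρ, hρS, hρmax⟩ := Finset.exists_max_image S pos ⟨σ, hσS⟩
  obtain ⟨c₀, hc₀, hRρc₀⟩ := (Finset.mem_filter.1 hρS).2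
  have hlowgen : ∀ c ∈ l.support, R ρ c ≠ 0 → IsLow K pos R c ρ := by
    intro c hc hne
    exact ⟨hne, fun ρ' hρ' => hρmax ρ' (Finset.mem_filter.2 ⟨Finset.mem_univ _, c, hc, hρ'⟩)⟩
  have hlow₀ : IsLow K pos R c₀ ρ := hlowgen c₀ hc₀ hRρc₀
  have hzρ : (Finsupp.linearCombination (ZMod 2) (col R) l) ρ ≠ 0 := by
    rw [hz_eval]
    rw [Finset.sum_eq_single c₀]
    · exact mul_ne_zero (Finsupp.mem_support_iff.1 hc₀) hRρc₀
    · intro c hc hne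
      by_cases h : R ρ c = 0
      · rw [h, mul_zero]
      · exact absurd (hred c c₀ ρ (hlowgen c hc h) hlow₀) hne
    · intro h; exact absurd hc₀ h
  have h1 : pos ρ ≤ pos σ := htop ρ hzρ
  have h2 : pos σ ≤ pos ρ := hρmax σ hσS
  have hρσ : ρ = σ := hinj (le_antisymm h1 h2)
  exact ⟨c₀, hl hc₀, hρσ ▸ hlow₀⟩


/-- Decomposition-independent characterization of the low of column `τ`. -/
def Phi (pos : Simp K → ℕ) (σ τ : Simp K) : Prop :=
  col (bdry K) τ ∈ colSpan (bdry K) (fun c => pos c < pos τ) ⊔ suppOn (fun ρ => pos ρ ≤ pos σ) ∧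
  col (bdry K) τ ∉ colSpan (bdry K) (fun c => pos c < pos τ) ⊔ suppOn (fun ρ => pos ρ < pos σ)

lemma isLow_iff_phi (pos : Simp K → ℕ) (hinj : Function.Injective pos)
    (R V : Matrix (Simp K) (Simp K) (ZMod 2))
    (hV : ∀ a b, pos b < pos a → V a b = 0) (hVu : IsUnit V)
    (hR : R = bdry K * V)
    (hred : ∀ τ₁ τ₂ s : Simp K, IsLow K pos R τ₁ s → IsLow K pos R τ₂ s → τ₁ = τ₂)
    (σ τ : Simp K) : IsLow K pos R τ σ ↔ Phi pos σ τ := by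
  haveI := hVu.invertible
  have hdet : IsUnit V.det := (Matrix.isUnit_iff_isUnit_det V).1 hVu
  have hVinv : ∀ a b, pos b < pos a → V⁻¹ a b = 0 := by
    have := Matrix.blockTriangular_inv_of_blockTriangular
      (M := V) (b := pos) (fun i j hij => hV i j hij)
    exact fun a b h => this h
  have hDRV : bdry K = R * V⁻¹ := by
    rw [hR, Matrix.mul_assoc, Matrix.mul_nonsing_inv _ hdet, Matrix.mul_one]
  have hspan : ∀ j, colSpan R (fun c => pos c < j) = colSpan (bdry K) (fun c => pos c < j) := by
    intro j
    refine le_antisymm ?_ ?_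
    · rw [hR]; exact colSpan_mul_le pos _ V hV j
    · conv_lhs => rw [hDRV]
      exact colSpan_mul_le pos R V⁻¹ hVinv j
  have hmemD : col (bdry K) τ - V⁻¹ τ τ • col R τ ∈ colSpan R (fun c => pos c < pos τ) := by
    have h := sub_diag_smul_mem pos hinj R V⁻¹ hVinv τ
    rwa [← hDRV] at h
  have hmemR : col R τ - V τ τ • col (bdry K) τ ∈ colSpan (bdry K) (fun c => pos c < pos τ) := by
    have h := sub_diag_smul_mem pos hinj (bdry K) V hV τ
    rwa [← hR] at h
  have hfwd : ∀ s : Simp K, IsLow K pos R τ s → Phi pos s τ := by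
    intro s hlow
    constructor
    · have h1 : col (bdry K) τ - V⁻¹ τ τ • col R τ
          ∈ colSpan (bdry K) (fun c => pos c < pos τ) := by rwa [hspan] at hmemD
      have h2 : V⁻¹ τ τ • col R τ ∈ suppOn (fun ρ => pos ρ ≤ pos s) := by
        refine Submodule.smul_mem _ _ (mem_suppOn.2 fun ρ hρ => ?_)
        by_contra hne
        exact hρ (hlow.2 ρ hne)
      have h3 := Submodule.add_mem _ (Submodule.mem_sup_left h1) (Submodule.mem_sup_right h2)
      simpa using h3
    · intro hmem
      rw [Submodule.mem_sup] at hmem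
      obtain ⟨w, hw, u, hu, heq⟩ := hmem
      have hzmem : col R τ - V τ τ • u ∈ colSpan R (fun c => pos c < pos τ) := by
        have he : col R τ - V τ τ • u
            = (col R τ - V τ τ • col (bdry K) τ) + V τ τ • w := by
          rw [← heq, smul_add]; abel
        rw [he]
        refine Submodule.add_mem _ ?_ (Submodule.smul_mem _ _ ?_)
        · rwa [← hspan] at hmemR
        · rwa [← hspan] at hw
      have huσ : u s = 0 := mem_suppOn.1 hu s (by omega)
      have hzσ : (col R τ - V τ τ • u) s ≠ 0 := by
        have he : (col R τ - V τ τ • u) s = R s τ - V τ τ * u s := rfl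
        rw [he, huσ, mul_zero, sub_zero]
        exact hlow.1
      have hztop : ∀ ρ, (col R τ - V τ τ • u) ρ ≠ 0 → pos ρ ≤ pos s := by
        intro ρ h
        by_contra hgt
        push_neg at hgt
        have h1 : R ρ τ = 0 := by
          by_contra h2; exact absurd (hlow.2 ρ h2) (by omega)
        have h2 : u ρ = 0 := mem_suppOn.1 hu ρ (by omega)
        have he : (col R τ - V τ τ • u) ρ = R ρ τ - V τ τ * u ρ := rfl
        exact h (by rw [he, h1, h2, mul_zero, sub_zero])
      obtain ⟨c, hc, hlc⟩ :=
        exists_low_of_mem_span pos hinj R hred _ _ hzmem s hzσ hztop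
      have hceq := hred c τ s hlc hlow
      rw [hceq] at hc
      exact lt_irrefl _ hc
  constructor
  · exact hfwd σ
  · intro hphi
    have hRτ : col R τ ≠ 0 := by
      intro h0
      apply hphi.2
      have h1 : col (bdry K) τ ∈ colSpan (bdry K) (fun c => pos c < pos τ) := by
        have h := hmemD
        rw [h0, smul_zero, sub_zero, hspan] at h
        exact h
      exact Submodule.mem_sup_left h1
    have hne : (Finset.univ.filter fun ρ => R ρ τ ≠ 0).Nonempty := by
      obtain ⟨ρ, hρ⟩ := Function.ne_iff.1 hRτ
      exact ⟨ρ, Finset.mem_filter.2 ⟨Finset.mem_univ _, by simpa [col] using hρ⟩⟩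
    obtain ⟨σ₁, hmem, hmax⟩ := Finset.exists_max_image _ pos hne
    have hlow1 : IsLow K pos R τ σ₁ :=
      ⟨(Finset.mem_filter.1 hmem).2,
        fun ρ hρ => hmax ρ (Finset.mem_filter.2 ⟨Finset.mem_univ _, hρ⟩)⟩
    have hphi1 : Phi pos σ₁ τ := hfwd σ₁ hlow1
    rcases lt_trichotomy (pos σ) (pos σ₁) with h | h | h
    · exfalso
      apply hphi1.2
      refine SetLike.le_def.1 (sup_le_sup_left ?_ _) hphi.1
      exact fun v hv ρ hρ => mem_suppOn.1 hv ρ (by omega)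
    · rwa [hinj h]
    · exfalso
      apply hphi.2
      refine SetLike.le_def.1 (sup_le_sup_left ?_ _) hphi1.1
      exact fun v hv ρ hρ => mem_suppOn.1 hv ρ (by omega)


/-- Position of the low of a column, plus one (0 for zero columns). -/
def lowVal (pos : Simp K → ℕ) (R : Matrix (Simp K) (Simp K) (ZMod 2)) (c : Simp K) : ℕ :=
  Finset.sup (Finset.univ.filter fun ρ => R ρ c ≠ 0) (fun ρ => pos ρ + 1)

def meas (pos : Simp K → ℕ) (R : Matrix (Simp K) (Simp K) (ZMod 2)) : ℕ :=
  ∑ c, lowVal pos R c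

lemma zmod2_ne_zero (x : ZMod 2) : x ≠ 0 → x = 1 := by revert x; decide

lemma reduction_step (pos : Simp K → ℕ) (hinj : Function.Injective pos)
    (R V : Matrix (Simp K) (Simp K) (ZMod 2))
    (hV : ∀ a b, pos b < pos a → V a b = 0) (hVu : IsUnit V) (hR : R = bdry K * V)
    (τ₁ τ₂ s : Simp K) (h1 : IsLow K pos R τ₁ s) (h2 : IsLow K pos R τ₂ s)
    (hlt : pos τ₁ < pos τ₂) :
    ∃ R' V' : Matrix (Simp K) (Simp K) (ZMod 2),
      (∀ a b, pos b < pos a → V' a b = 0) ∧ IsUnit V' ∧ R' = bdry K * V' ∧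
      meas pos R' < meas pos R := by
  classical
  have hτne : τ₁ ≠ τ₂ := fun h => by rw [h] at hlt; exact lt_irrefl _ hlt
  set E : Matrix (Simp K) (Simp K) (ZMod 2) := 1 + Matrix.single τ₁ τ₂ 1 with hE
  have hEtri : ∀ a b, pos b < pos a → E a b = 0 := by
    intro a b h
    have hab : a ≠ b := fun he => by rw [he] at h; exact lt_irrefl _ h
    have hsb : ¬ (τ₁ = a ∧ τ₂ = b) := by
      rintro ⟨rfl, rfl⟩; omega
    simp [hE, Matrix.one_apply_ne hab, Matrix.single, hsb]
  have hNN : Matrix.single τ₁ τ₂ (1 : ZMod 2) * Matrix.single τ₁ τ₂ (1 : ZMod 2)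
      = 0 := Matrix.single_mul_single_of_ne _ _ _ _ (Ne.symm hτne) _
  have hEE : E * E = 1 := by
    rw [hE, add_mul, mul_add, mul_add, one_mul, mul_one, one_mul, hNN, add_zero, add_assoc]
    have hxx : Matrix.single τ₁ τ₂ (1 : ZMod 2)
        + Matrix.single τ₁ τ₂ (1 : ZMod 2) = 0 := by
      ext i j
      have : ∀ x : ZMod 2, x + x = 0 := by decide
      simp [this]
    rw [hxx, add_zero]
  have hEu : IsUnit E := ⟨⟨E, E, hEE, hEE⟩, rfl⟩
  refine ⟨R * E, V * E, ?_, hVu.mul hEu, by rw [hR, Matrix.mul_assoc], ?_⟩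
  · exact fun a b h =>
      (Matrix.BlockTriangular.mul (fun i j hij => hV i j hij) (fun i j hij => hEtri i j hij)) h
  · -- entries of R * E
    have hcol : ∀ r c, (R * E) r c = R r c + if c = τ₂ then R r τ₁ else 0 := by
      intro r c
      rw [hE, Matrix.mul_add, Matrix.mul_one, Matrix.add_apply]
      congr 1
      by_cases hc : c = τ₂
      · subst hc
        rw [if_pos rfl, Matrix.mul_single_apply_same, mul_one]
      · rw [if_neg hc, Matrix.mul_single_apply_of_ne (hbj := hc)]
    have hsame : ∀ c, c ≠ τ₂ → lowVal pos (R * E) c = lowVal pos R c := by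
      intro c hc
      unfold lowVal
      congr 1
      apply Finset.filter_congr
      intro ρ _
      rw [hcol ρ c, if_neg hc, add_zero]
    have hv2 : lowVal pos R τ₂ = pos s + 1 := by
      apply le_antisymm
      · exact Finset.sup_le fun ρ hρ => by
          have := h2.2 ρ (Finset.mem_filter.1 hρ).2; omega
      · have hmem : s ∈ Finset.univ.filter (fun ρ => R ρ τ₂ ≠ 0) :=
          Finset.mem_filter.2 ⟨Finset.mem_univ _, h2.1⟩
        exact Finset.le_sup (f := fun ρ => pos ρ + 1) hmem
    have hv2' : lowVal pos (R * E) τ₂ < lowVal pos R τ₂ := by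
      rw [hv2]
      have : lowVal pos (R * E) τ₂ ≤ pos s := by
        apply Finset.sup_le
        intro ρ hρ
        have hne := (Finset.mem_filter.1 hρ).2
        rw [hcol ρ τ₂, if_pos rfl] at hne
        have hlt2 : pos ρ < pos s := by
          rcases lt_trichotomy (pos ρ) (pos s) with h | h | h
          · exact h
          · exfalso
            have : ρ = s := hinj h
            subst this
            rw [zmod2_ne_zero _ h1.1, zmod2_ne_zero _ h2.1] at hne
            exact hne (by decide)
          · exfalso
            have hz1 : R ρ τ₁ = 0 := by
              by_contra hx; have := h1.2 ρ hx; omega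
            have hz2 : R ρ τ₂ = 0 := by
              by_contra hx; have := h2.2 ρ hx; omega
            rw [hz1, hz2, add_zero] at hne
            exact hne rfl
        omega
      omega
    unfold meas
    apply Finset.sum_lt_sum
    · intro c _
      by_cases hc : c = τ₂
      · subst hc; exact le_of_lt hv2'
      · rw [hsame c hc]
    · exact ⟨τ₂, Finset.mem_univ _, hv2'⟩

lemma exists_reduced (pos : Simp K → ℕ) (hinj : Function.Injective pos) :
    ∃ R V : Matrix (Simp K) (Simp K) (ZMod 2),
      (∀ a b, pos b < pos a → V a b = 0) ∧ IsUnit V ∧ R = bdry K * V ∧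
      (∀ τ₁ τ₂ s : Simp K, IsLow K pos R τ₁ s → IsLow K pos R τ₂ s → τ₁ = τ₂) := by
  classical
  suffices h : ∀ n : ℕ, ∀ R V : Matrix (Simp K) (Simp K) (ZMod 2),
      meas pos R ≤ n → (∀ a b, pos b < pos a → V a b = 0) → IsUnit V → R = bdry K * V →
      ∃ R' V' : Matrix (Simp K) (Simp K) (ZMod 2),
        (∀ a b, pos b < pos a → V' a b = 0) ∧ IsUnit V' ∧ R' = bdry K * V' ∧
        (∀ τ₁ τ₂ s : Simp K, IsLow K pos R' τ₁ s → IsLow K pos R' τ₂ s → τ₁ = τ₂) by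
    exact h (meas pos (bdry K)) (bdry K) 1 le_rfl
      (fun a b h => Matrix.one_apply_ne (fun he => by rw [he] at h; exact lt_irrefl _ h))
      isUnit_one (by rw [mul_one])
  intro n
  induction n using Nat.strong_induction_on with
  | _ n ih =>
    intro R V hm hV hVu hR
    by_cases hred : ∀ τ₁ τ₂ s : Simp K, IsLow K pos R τ₁ s → IsLow K pos R τ₂ s → τ₁ = τ₂
    · exact ⟨R, V, hV, hVu, hR, hred⟩
    · push_neg at hred
      obtain ⟨τ₁, τ₂, s, h1, h2, hne⟩ := hred
      have hposne : pos τ₁ ≠ pos τ₂ := fun h => hne (hinj h)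
      have hstep : ∃ R' V' : Matrix (Simp K) (Simp K) (ZMod 2),
          (∀ a b, pos b < pos a → V' a b = 0) ∧ IsUnit V' ∧ R' = bdry K * V' ∧
          meas pos R' < meas pos R := by
        rcases lt_or_gt_of_ne hposne with h | h
        · exact reduction_step pos hinj R V hV hVu hR τ₁ τ₂ s h1 h2 h
        · exact reduction_step pos hinj R V hV hVu hR τ₂ τ₁ s h2 h1 h
      obtain ⟨R', V', hV', hVu', hR', hm'⟩ := hstep
      have hlt : meas pos R' < n := lt_of_lt_of_le hm' hm
      exact ih (meas pos R') hlt R' V' le_rfl hV' hVu' hR'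


lemma phi_congr (pos pos' : Simp K → ℕ) (σ τ : Simp K)
    (hτlt : ∀ c, pos c < pos τ ↔ pos' c < pos' τ)
    (hσle : ∀ ρ, pos ρ ≤ pos σ ↔ pos' ρ ≤ pos' σ)
    (hσlt : ∀ ρ, pos ρ < pos σ ↔ pos' ρ < pos' σ) :
    Phi pos σ τ ↔ Phi pos' σ τ := by
  have e1 : (fun c => pos c < pos τ) = fun c => pos' c < pos' τ :=
    funext fun c => propext (hτlt c)
  have e2 : (fun ρ => pos ρ ≤ pos σ) = fun ρ => pos' ρ ≤ pos' σ :=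
    funext fun ρ => propext (hσle ρ)
  have e3 : (fun ρ => pos ρ < pos σ) = fun ρ => pos' ρ < pos' σ :=
    funext fun ρ => propext (hσlt ρ)
  unfold Phi
  rw [e1, e2, e3]

end ReorderAux

lemma persPair_dir (K : Finset (Finset ℕ)) (pos pos' : Simp K → ℕ)
    (hinj : Function.Injective pos) (hinj' : Function.Injective pos')
    (X : Set (Simp K)) (a b : ℕ)
    (hcontig : ∀ s : Simp K, s ∈ X ↔ a ≤ pos s ∧ pos s ≤ b)
    (hout : ∀ s : Simp K, s ∉ X → pos' s = pos s)
    (hin : ∀ s ∈ X, a ≤ pos' s ∧ pos' s ≤ b)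
    (σ τ : Simp K) (hσ : σ ∉ X) (hτ : τ ∉ X) :
    PersPair K pos σ τ → PersPair K pos' σ τ := by
  rintro ⟨R, V, hV, hVu, hR, hred, hlow⟩
  classical
  have hτ' : pos' τ = pos τ := hout τ hτ
  have hσ' : pos' σ = pos σ := hout σ hσ
  have hτb : ¬ (a ≤ pos τ ∧ pos τ ≤ b) := fun h => hτ ((hcontig τ).2 h)
  have hσb : ¬ (a ≤ pos σ ∧ pos σ ≤ b) := fun h => hσ ((hcontig σ).2 h)
  have key : ∀ c : Simp K,
      (pos c < pos τ ↔ pos' c < pos' τ) ∧ (pos c ≤ pos σ ↔ pos' c ≤ pos' σ) ∧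
      (pos c < pos σ ↔ pos' c < pos' σ) := by
    intro c
    by_cases hc : c ∈ X
    · have hc1 := (hcontig c).1 hc
      have hc2 := hin c hc
      rw [hτ', hσ']
      omega
    · rw [hτ', hσ', hout c hc]
      omega
  have hphi : ReorderAux.Phi pos σ τ :=
    (ReorderAux.isLow_iff_phi pos hinj R V hV hVu hR hred σ τ).1 hlow
  have hphi' : ReorderAux.Phi pos' σ τ :=
    (ReorderAux.phi_congr pos pos' σ τ (fun c => (key c).1) (fun c => (key c).2.1)
      (fun c => (key c).2.2)).1 hphi
  obtain ⟨R', V', hV', hVu', hR', hred'⟩ := ReorderAux.exists_reduced pos' hinj'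
  exact ⟨R', V', hV', hVu', hR', hred',
    (ReorderAux.isLow_iff_phi pos' hinj' R' V' hV' hVu' hR' hred' σ τ).2 hphi'⟩

/-- Reordering stability: if `X` is a contiguous set of simplices in the
filtration and a second filtration reorders only the simplices of `X` (keeping
all other simplices and the set of positions occupied by `X` fixed), then every
persistence pair with both endpoints outside `X` is the same in both
filtrations. -/
theorem reordering_stability (K : Finset (Finset ℕ)) (hK : IsComplex K)
    (pos : Simp K → ℕ) (hpos : IsSimpFiltration K pos)
    (X : Set (Simp K)) (a b : ℕ)
    (hcontig : ∀ s : Simp K, s ∈ X ↔ a ≤ pos s ∧ pos s ≤ b)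
    (pos' : Simp K → ℕ) (hpos' : IsSimpFiltration K pos')
    (hout : ∀ s : Simp K, s ∉ X → pos' s = pos s)
    (hin : ∀ s ∈ X, a ≤ pos' s ∧ pos' s ≤ b) :
    ∀ σ τ : Simp K, σ ∉ X → τ ∉ X →
      (PersPair K pos σ τ ↔ PersPair K pos' σ τ) := by
  intro σ τ hσ hτ
  have hcontig' : ∀ s : Simp K, s ∈ X ↔ a ≤ pos' s ∧ pos' s ≤ b := by
    intro s
    constructor
    · exact hin s
    · intro h
      by_contra hs
      rw [hout s hs] at h
      exact hs ((hcontig s).2 h)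
  have hout' : ∀ s : Simp K, s ∉ X → pos s = pos' s := fun s hs => (hout s hs).symm
  have hin' : ∀ s ∈ X, a ≤ pos s ∧ pos s ≤ b := fun s hs => (hcontig s).1 hs
  constructor
  · exact persPair_dir K pos pos' hpos.1 hpos'.1 X a b hcontig hout hin σ τ hσ hτ
  · exact persPair_dir K pos' pos hpos'.1 hpos.1 X a b hcontig' hout' hin' σ τ hσ hτ
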